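/- Let S_1, …, S_m ⊆ {1,…,n} be an (n, ℓ, γ)-sharing set family of size m with ℓ ≥ γ + 1. Then m·C(ℓ, γ + 1) ≤ C(n, γ + 1); equivalently m(n, ℓ, γ) ≤ C(n, γ+1) / C(ℓ, γ+1). -/

import Mathlib

/-- For an (n, ℓ, γ)-sharing set family of size m with ℓ ≥ γ + 1,
m·C(ℓ, γ+1) ≤ C(n, γ+1). -/
theorem stmt18 (n ℓ γ m : ℕ) (h : γ + 1 ≤ ℓ) (S : Fin m → Finset ℕ)
    (hinj : Function.Injective S)
    (hsub : ∀ i, S i ⊆ Finset.Icc 1 n) (hcard : ∀ i, (S i).card = ℓ)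
    (hint : ∀ i j, i ≠ j → (S i ∩ S j).card ≤ γ) :
    m * ℓ.choose (γ + 1) ≤ n.choose (γ + 1) := by
  classical
  have hdisj : ((Finset.univ : Finset (Fin m)) : Set (Fin m)).PairwiseDisjoint
      (fun i => (S i).powersetCard (γ + 1)) := by
    intro i _ j _ hij
    simp only [Function.onFun]
    rw [Finset.disjoint_left]
    intro t hti htj
    rw [Finset.mem_powersetCard] at hti htj
    have : t ⊆ S i ∩ S j := Finset.subset_inter hti.1 htj.1
    have := (Finset.card_le_card this).trans (hint i j hij)
    omega
  have hsum : ((Finset.univ : Finset (Fin m)).biUnion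
      (fun i => (S i).powersetCard (γ + 1))).card = m * ℓ.choose (γ + 1) := by
    rw [Finset.card_biUnion hdisj]
    simp [Finset.card_powersetCard, hcard, Finset.mul_sum]
  have hsubT : ((Finset.univ : Finset (Fin m)).biUnion
      (fun i => (S i).powersetCard (γ + 1))) ⊆ (Finset.Icc 1 n).powersetCard (γ + 1) := by
    intro t ht
    rw [Finset.mem_biUnion] at ht
    obtain ⟨i, _, hti⟩ := ht
    rw [Finset.mem_powersetCard] at hti ⊢
    exact ⟨hti.1.trans (hsub i), hti.2⟩
  have := Finset.card_le_card hsubT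
  rwa [hsum, Finset.card_powersetCard, Nat.card_Icc, Nat.add_sub_cancel] at this
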